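/- arXiv:2106.07080 — 3 statements merged into one kernel-verified Lean document; each statement's English description precedes it below -/
import Mathlib

section
/- Let p be a real number with 0 ≤ p < 1/2, let μ be a probability measure on a measurable space X, and let h*, h1, h2, h3 : X → {−1,+1} be measurable classifiers with h* the target. Suppose the events C = {x : h1(x) = h*(x)}, I = {x : h1(x) ≠ h*(x)}, and E = {x : h1(x) ≠ h2(x)} all have positive μ-measure. Define D_C := μ(·|C), D_I := μ(·|I), D_2 := (1/2)·D_C + (1/2)·D_I, and D_3 := μ(·|E). If err_μ(h1) ≤ p, err_{D_2}(h2) ≤ p, and err_{D_3}(h3) ≤ p, then err_μ(Maj(h1,h2,h3)) ≤ 3p² − 2p³. -/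
open MeasureTheory ProbabilityTheory Set
open scoped ENNReal

lemma maj_cases (a b c d : ℝ) (ha : a = 1 ∨ a = -1) (hb : b = 1 ∨ b = -1)
    (hc : c = 1 ∨ c = -1) (h : Real.sign (a + b + c) ≠ d) :
    (b ≠ d ∧ a ≠ d) ∨ (a ≠ b ∧ c ≠ d) := by
  rcases ha with rfl | rfl <;> rcases hb with rfl | rfl <;> rcases hc with rfl | rfl <;>
    norm_num [Real.sign] at h ⊢ <;> tauto

lemma two_val_S1 {a b c : ℝ} (ha : a = 1 ∨ a = -1) (hb : b = 1 ∨ b = -1)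
    (hc : c = 1 ∨ c = -1) : (b ≠ c ∧ a = c) ↔ (a ≠ b ∧ a = c) := by
  rcases ha with rfl | rfl <;> rcases hb with rfl | rfl <;> rcases hc with rfl | rfl <;>
    norm_num

lemma two_val_S2 {a b c : ℝ} (ha : a = 1 ∨ a = -1) (hb : b = 1 ∨ b = -1)
    (hc : c = 1 ∨ c = -1) : (a ≠ c ∧ ¬b ≠ c) ↔ (a ≠ b ∧ a ≠ c) := by
  rcases ha with rfl | rfl <;> rcases hb with rfl | rfl <;> rcases hc with rfl | rfl <;>
    norm_num

/-- Schapire's boosting theorem: if `h1` has error at most `p` on `μ`, `h2` has error at most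
`p` on the balanced mixture of the conditionals of `μ` on the correct/incorrect regions of `h1`,
and `h3` has error at most `p` on `μ` conditioned on the disagreement region of `h1` and `h2`,
then the majority vote has error at most `3p² - 2p³` on `μ`. -/
theorem boosting_majority_vote {X : Type*} [MeasurableSpace X]
    (μ : Measure X) [IsProbabilityMeasure μ]
    (p : ℝ) (hp0 : 0 ≤ p) (hp : p < 1 / 2)
    (hstar h1 h2 h3 : X → ℝ)
    (hstar_val : ∀ x, hstar x = 1 ∨ hstar x = -1)
    (h1_val : ∀ x, h1 x = 1 ∨ h1 x = -1)
    (h2_val : ∀ x, h2 x = 1 ∨ h2 x = -1)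
    (h3_val : ∀ x, h3 x = 1 ∨ h3 x = -1)
    (hstar_meas : Measurable hstar) (h1_meas : Measurable h1)
    (h2_meas : Measurable h2) (h3_meas : Measurable h3)
    (hC : 0 < μ {x | h1 x = hstar x})
    (hI : 0 < μ {x | h1 x ≠ hstar x})
    (hE : 0 < μ {x | h1 x ≠ h2 x})
    (err1 : μ {x | h1 x ≠ hstar x} ≤ ENNReal.ofReal p)
    (err2 : ((1 / 2 : ℝ≥0∞) • μ[|{x | h1 x = hstar x}]
              + (1 / 2 : ℝ≥0∞) • μ[|{x | h1 x ≠ hstar x}]) {x | h2 x ≠ hstar x}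
            ≤ ENNReal.ofReal p)
    (err3 : μ[|{x | h1 x ≠ h2 x}] {x | h3 x ≠ hstar x} ≤ ENNReal.ofReal p) :
    μ {x | Real.sign (h1 x + h2 x + h3 x) ≠ hstar x}
      ≤ ENNReal.ofReal (3 * p ^ 2 - 2 * p ^ 3) := by
  classical
  set C := {x | h1 x = hstar x} with hCdef
  set I := {x | h1 x ≠ hstar x} with hIdef
  set E := {x | h1 x ≠ h2 x} with hEdef
  set H2 := {x | h2 x ≠ hstar x} with hH2def
  set H3 := {x | h3 x ≠ hstar x} with hH3def
  have hIC : I = Cᶜ := rfl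
  have hCm : MeasurableSet C := measurableSet_eq_fun h1_meas hstar_meas
  have hIm : MeasurableSet I := hCm.compl
  have hEm : MeasurableSet E := (measurableSet_eq_fun h1_meas h2_meas).compl
  have hH2m : MeasurableSet H2 := (measurableSet_eq_fun h2_meas hstar_meas).compl
  have hH3m : MeasurableSet H3 := (measurableSet_eq_fun h3_meas hstar_meas).compl
  -- rewrite conditional measures
  have e2 : (1 / 2 : ℝ≥0∞) * ((μ C)⁻¹ * μ (C ∩ H2))
      + (1 / 2 : ℝ≥0∞) * ((μ I)⁻¹ * μ (I ∩ H2)) ≤ ENNReal.ofReal p := by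
    have h := err2
    rw [Measure.add_apply, Measure.smul_apply, Measure.smul_apply, smul_eq_mul, smul_eq_mul,
      cond_apply hCm, cond_apply hIm] at h
    exact h
  have e3 : (μ E)⁻¹ * μ (E ∩ H3) ≤ ENNReal.ofReal p := by
    have h := err3
    rwa [cond_apply hEm] at h
  -- real versions
  have hrc : 0 < (μ C).toReal := ENNReal.toReal_pos hC.ne' (measure_ne_top μ C)
  have hri : 0 < (μ I).toReal := ENNReal.toReal_pos hI.ne' (measure_ne_top μ I)
  have hre : 0 < (μ E).toReal := ENNReal.toReal_pos hE.ne' (measure_ne_top μ E)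
  have hsum1 : μ C + μ I = 1 := by rw [hIC, measure_add_measure_compl hCm]; exact measure_univ
  have hsum : (μ C).toReal + (μ I).toReal = 1 := by
    rw [← ENNReal.toReal_add (measure_ne_top μ C) (measure_ne_top μ I), hsum1, ENNReal.toReal_one]
  have hri_p : (μ I).toReal ≤ p := ENNReal.toReal_le_of_le_ofReal hp0 err1
  have e2r : (1 / 2 : ℝ) * ((μ C).toReal⁻¹ * (μ (C ∩ H2)).toReal)
      + (1 / 2 : ℝ) * ((μ I).toReal⁻¹ * (μ (I ∩ H2)).toReal) ≤ p := by
    have h := ENNReal.toReal_le_of_le_ofReal hp0 e2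
    rw [ENNReal.toReal_add, ENNReal.toReal_mul, ENNReal.toReal_mul, ENNReal.toReal_mul,
      ENNReal.toReal_mul, ENNReal.toReal_inv, ENNReal.toReal_inv] at h
    · norm_num at h ⊢
      convert h using 2 <;> norm_num
    · exact ENNReal.mul_ne_top (by norm_num)
        (ENNReal.mul_ne_top (ENNReal.inv_ne_top.2 hC.ne') (measure_ne_top μ _))
    · exact ENNReal.mul_ne_top (by norm_num)
        (ENNReal.mul_ne_top (ENNReal.inv_ne_top.2 hI.ne') (measure_ne_top μ _))
  have e3r : (μ E).toReal⁻¹ * (μ (E ∩ H3)).toReal ≤ p := by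
    have h := ENNReal.toReal_le_of_le_ofReal hp0 e3
    rwa [ENNReal.toReal_mul, ENNReal.toReal_inv] at h
  -- set identities
  have S1 : C ∩ H2 = E ∩ C := by
    ext x
    simp only [hCdef, hH2def, hEdef, Set.mem_inter_iff, Set.mem_setOf_eq]
    constructor
    · rintro ⟨hc, hb⟩
      exact ⟨((two_val_S1 (h1_val x) (h2_val x) (hstar_val x)).mp ⟨hb, hc⟩).1, hc⟩
    · rintro ⟨hab, hc⟩
      exact ⟨hc, ((two_val_S1 (h1_val x) (h2_val x) (hstar_val x)).mpr ⟨hab, hc⟩).1⟩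
  have S2 : I \ H2 = E ∩ I := by
    ext x
    simp only [hIdef, hH2def, hEdef, Set.mem_diff, Set.mem_inter_iff, Set.mem_setOf_eq]
    constructor
    · rintro ⟨hi, hb⟩
      exact ⟨((two_val_S2 (h1_val x) (h2_val x) (hstar_val x)).mp ⟨hi, hb⟩).1, hi⟩
    · rintro ⟨hab, hi⟩
      exact ⟨hi, ((two_val_S2 (h1_val x) (h2_val x) (hstar_val x)).mpr ⟨hab, hi⟩).2⟩
  have hE_split : μ (E ∩ C) + μ (E ∩ I) = μ E := by
    have h : E ∩ I = E \ C := by rw [hIC, Set.diff_eq]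
    rw [h]
    exact measure_inter_add_diff (μ := μ) E hCm
  have hI_split : μ (I ∩ H2) + μ (E ∩ I) = μ I := by
    have h := measure_inter_add_diff (μ := μ) I hH2m
    rwa [S2] at h
  -- pass splits to reals
  have hE_split_r : (μ (C ∩ H2)).toReal + (μ (E ∩ I)).toReal = (μ E).toReal := by
    have h := congrArg ENNReal.toReal hE_split
    rw [ENNReal.toReal_add (measure_ne_top μ _) (measure_ne_top μ _)] at h
    rw [S1]
    exact h
  have hI_split_r : (μ (I ∩ H2)).toReal + (μ (E ∩ I)).toReal = (μ I).toReal := by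
    have h := congrArg ENNReal.toReal hI_split
    rwa [ENNReal.toReal_add (measure_ne_top μ _) (measure_ne_top μ _)] at h
  -- main real inequality
  have key : (μ (I ∩ H2)).toReal + (μ (E ∩ H3)).toReal ≤ 3 * p ^ 2 - 2 * p ^ 3 := by
    set ri := (μ I).toReal
    set rc := (μ C).toReal
    set A := (μ (C ∩ H2)).toReal with hAdef
    set B := (μ (I ∩ H2)).toReal with hBdef
    set T := (μ (E ∩ H3)).toReal with hTdef
    set ei := (μ (E ∩ I)).toReal with heidef
    set a' := rc⁻¹ * A with ha'def
    set b' := ri⁻¹ * B with hb'def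
    have hA : a' * rc = A := by
      rw [ha'def, mul_comm, ← mul_assoc, mul_inv_cancel₀ hrc.ne', one_mul]
    have hB : b' * ri = B := by
      rw [hb'def, mul_comm, ← mul_assoc, mul_inv_cancel₀ hri.ne', one_mul]
    have hb'0 : 0 ≤ b' := mul_nonneg (inv_nonneg.2 hri.le) ENNReal.toReal_nonneg
    have hab : a' + b' ≤ 2 * p := by
      rw [ha'def, hb'def]; linarith [e2r]
    have hT : T ≤ p * ((μ E).toReal) := by
      have h := mul_le_mul_of_nonneg_right e3r hre.le
      rwa [mul_comm ((μ E).toReal⁻¹) T, mul_assoc, inv_mul_cancel₀ hre.ne', mul_one] at h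
    have hTb : T ≤ p * (a' * rc + ri - b' * ri) := by
      rw [hA, hB]
      have : (μ E).toReal = A + (ri - B) := by linarith [hE_split_r, hI_split_r]
      rw [this] at hT
      linarith
    have h1' : 0 ≤ b' * (p - ri) := mul_nonneg hb'0 (by linarith)
    have h2' : 0 ≤ p * rc * (2 * p - a' - b') :=
      mul_nonneg (mul_nonneg hp0 hrc.le) (by linarith)
    have h3' : 0 ≤ p * (1 - 2 * p) * (p - ri) :=
      mul_nonneg (mul_nonneg hp0 (by linarith)) (by linarith)
    have hrc_eq : rc = 1 - ri := by linarith
    rw [hrc_eq] at hTb h2'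
    rw [← hB]
    nlinarith [h1', h2', h3', hTb]
  -- subset
  have hsub : {x | Real.sign (h1 x + h2 x + h3 x) ≠ hstar x} ⊆ (I ∩ H2) ∪ (E ∩ H3) := by
    intro x hx
    rcases maj_cases (h1 x) (h2 x) (h3 x) (hstar x) (h1_val x) (h2_val x) (h3_val x) hx with
      ⟨u, v⟩ | ⟨u, v⟩
    · exact Or.inl ⟨v, u⟩
    · exact Or.inr ⟨u, v⟩
  calc μ {x | Real.sign (h1 x + h2 x + h3 x) ≠ hstar x}
      ≤ μ ((I ∩ H2) ∪ (E ∩ H3)) := measure_mono hsub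
    _ ≤ μ (I ∩ H2) + μ (E ∩ H3) := measure_union_le _ _
    _ = ENNReal.ofReal ((μ (I ∩ H2)).toReal + (μ (E ∩ H3)).toReal) := by
        rw [ENNReal.ofReal_add ENNReal.toReal_nonneg ENNReal.toReal_nonneg,
          ENNReal.ofReal_toReal (measure_ne_top μ _), ENNReal.ofReal_toReal (measure_ne_top μ _)]
    _ ≤ ENNReal.ofReal (3 * p ^ 2 - 2 * p ^ 3) := ENNReal.ofReal_le_ofReal key
end

section
/- Let α₀ ∈ (0,1] and define αᵢ₊₁ = αᵢ/(1 − αᵢ/8). For any C with α₀ ≤ C < 1 and any natural number k satisfying 8/α₀ − 8/C ≤ k and k·α₀ < 8, one has α_k ≥ C. In particular, taking C = 0.7, any natural number k with 8/α₀ − 80/7 ≤ k < 8/α₀ satisfies α_k ≥ 0.7. -/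
/-- `O(1/α₀)` pruning steps suffice to raise the fraction of perfect workers to any constant
`C < 1`; in particular, to `0.7`. -/
theorem pruning_steps_reach_constant_fraction (α₀ : ℝ) (h0 : 0 < α₀) (h1 : α₀ ≤ 1)
    (a : ℕ → ℝ) (ha0 : a 0 = α₀) (harec : ∀ i, a (i + 1) = a i / (1 - a i / 8)) :
    (∀ C : ℝ, α₀ ≤ C → C < 1 →
      ∀ k : ℕ, 8 / α₀ - 8 / C ≤ (k : ℝ) → (k : ℝ) * α₀ < 8 → C ≤ a k)
    ∧ (∀ k : ℕ, 8 / α₀ - 80 / 7 ≤ (k : ℝ) → (k : ℝ) < 8 / α₀ → 0.7 ≤ a k) := by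
  have key : ∀ k : ℕ, (k : ℝ) < 8 / α₀ → a k = 8 / (8 / α₀ - k) := by
    intro k
    induction k with
    | zero =>
      intro _
      simp [ha0]
    | succ n ih =>
      intro hk
      have hn : (n : ℝ) < 8 / α₀ := by
        have : (n : ℝ) < (n : ℝ) + 1 := by linarith
        push_cast at hk; linarith
      have hd : (1 : ℝ) < 8 / α₀ - n := by push_cast at hk; linarith
      have hd0 : 8 / α₀ - (n : ℝ) ≠ 0 := by linarith
      have hd1 : 8 / α₀ - (n : ℝ) - 1 ≠ 0 := by linarith
      rw [harec, ih hn]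
      push_cast
      have e2 : 8 / α₀ - ((n : ℝ) + 1) = (8 / α₀ - (n : ℝ)) - 1 := by ring
      rw [e2]
      generalize hg : 8 / α₀ - (n : ℝ) = d at hd0 hd1 ⊢
      have e1 : (1:ℝ) - 8 / d / 8 = (d - 1) / d := by field_simp
      rw [e1, div_div_div_cancel_right₀ hd0]
  constructor
  · intro C hC hC1 k hk1 hk2
    have hC0 : 0 < C := lt_of_lt_of_le h0 hC
    have hklt : (k : ℝ) < 8 / α₀ := by
      rw [lt_div_iff₀ h0]; linarith
    rw [key k hklt]
    have hdpos : 0 < 8 / α₀ - (k : ℝ) := by linarith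
    rw [le_div_iff₀ hdpos]
    have : 8 / α₀ - (k : ℝ) ≤ 8 / C := by linarith
    calc C * (8 / α₀ - k) ≤ C * (8 / C) := by nlinarith
      _ = 8 := by field_simp
  · intro k hk1 hk2
    rw [key k hk2]
    have hdpos : 0 < 8 / α₀ - (k : ℝ) := by linarith
    rw [le_div_iff₀ hdpos]
    nlinarith
end

section
/- Let D_I and D_C be probability measures on a measurable space X and let ε ∈ (0,1]. Define the mixtures D_X := (√ε/2)·D_I + (1 − √ε/2)·D_C and D_2 := (1/2)·D_I + (1/2)·D_C. Then for every measurable set R with D_X(R) ≤ ε/4, one has D_2(R) ≤ √ε/4. -/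
open MeasureTheory
open scoped ENNReal

/-- Transferring a density bound from the marginal mixture `D_X = (√ε/2)·D_I + (1 − √ε/2)·D_C`
to the balanced mixture `D_2 = (1/2)·D_I + (1/2)·D_C`: if `D_X(R) ≤ ε/4` then
`D_2(R) ≤ √ε/4`. -/
theorem mixture_density_transfer {X : Type*} [MeasurableSpace X]
    (DI DC : Measure X) [IsProbabilityMeasure DI] [IsProbabilityMeasure DC]
    (ε : ℝ) (hε0 : 0 < ε) (hε1 : ε ≤ 1)
    (R : Set X) (hRmeas : MeasurableSet R)
    (hR : (ENNReal.ofReal (Real.sqrt ε / 2) • DI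
            + ENNReal.ofReal (1 - Real.sqrt ε / 2) • DC) R ≤ ENNReal.ofReal (ε / 4)) :
    ((1 / 2 : ℝ≥0∞) • DI + (1 / 2 : ℝ≥0∞) • DC) R ≤ ENNReal.ofReal (Real.sqrt ε / 4) := by
  set s := Real.sqrt ε with hs
  have hs0 : 0 < s := Real.sqrt_pos.2 hε0
  have hs1 : s ≤ 1 := Real.sqrt_le_one.2 hε1
  have hsq : s * s = ε := Real.mul_self_sqrt hε0.le
  simp only [Measure.add_apply, Measure.smul_apply, smul_eq_mul] at hR ⊢
  set a := DI R with ha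
  set b := DC R with hb
  have half : (1/2 : ℝ≥0∞) = ENNReal.ofReal (1/2) := by
    rw [ENNReal.ofReal_div_of_pos (by norm_num)]; simp
  have key : (1/2 : ℝ≥0∞) * a + (1/2 : ℝ≥0∞) * b
      ≤ ENNReal.ofReal (1/s) * (ENNReal.ofReal (s/2) * a + ENNReal.ofReal (1 - s/2) * b) := by
    rw [mul_add, ← mul_assoc, ← mul_assoc, ← ENNReal.ofReal_mul (by positivity),
      ← ENNReal.ofReal_mul (by positivity)]
    have e1 : (1/s) * (s/2) = 1/2 := by field_simp
    have e2 : (1/2 : ℝ) ≤ (1/s) * (1 - s/2) := by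
      rw [one_div s, inv_mul_eq_div, le_div_iff₀ hs0]
      nlinarith
    rw [e1, ← half]
    gcongr
    rw [half]
    exact ENNReal.ofReal_le_ofReal e2
  refine key.trans ?_
  calc ENNReal.ofReal (1/s) * (ENNReal.ofReal (s/2) * a + ENNReal.ofReal (1 - s/2) * b)
      ≤ ENNReal.ofReal (1/s) * ENNReal.ofReal (ε/4) := by gcongr
    _ = ENNReal.ofReal ((1/s) * (ε/4)) := (ENNReal.ofReal_mul (by positivity)).symm
    _ = ENNReal.ofReal (s/4) := by
        congr 1
        field_simp
        nlinarith
end
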